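/- Under the hypotheses of the previous statement, but with $a\in (W^{2,\infty}(\Omega))^{n\times n}$ and $u_0\in W^{3,\infty}(\Omega)$: there exist constants $C>0$ and $s_2>0$ such that for all $s\ge s_2$ and all $g\in H_0^2(\Omega)$, $s^2\int_\Omega(|g|^2+|\nabla g|^2)e^{2s\varphi_0}\,dx \le C\int_\Omega(|\mathcal{L}_0 g|^2+|\nabla(\mathcal{L}_0 g)|^2)e^{2s\varphi_0}\,dx$. -/

import Mathlib

open MeasureTheory Real

/-- The `i`-th partial derivative of `f` at `x`. -/
noncomputable def pd {n : ℕ} (f : EuclideanSpace ℝ (Fin n) → ℝ) (i : Fin n)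
    (x : EuclideanSpace ℝ (Fin n)) : ℝ :=
  fderiv ℝ f x (EuclideanSpace.single i 1)

/-- The first-order transport operator `L₀ g = div(g a ∇u₀)`. -/
noncomputable def L0op {n : ℕ}
    (a : EuclideanSpace ℝ (Fin n) → Fin n → Fin n → ℝ)
    (u0 g : EuclideanSpace ℝ (Fin n) → ℝ) (x : EuclideanSpace ℝ (Fin n)) : ℝ :=
  ∑ i, pd (fun y => g y * ∑ j, a y i j * pd u0 j y) i x

variable {n : ℕ}
local notation "E" => EuclideanSpace ℝ (Fin n)

lemma pd_contDiff {k : ℕ} {f : E → ℝ} (hf : ContDiff ℝ (k+1) f) (i : Fin n) :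
    ContDiff ℝ k (pd f i) := by
  have h : pd f i = fun x => (ContinuousLinearMap.apply ℝ ℝ (EuclideanSpace.single i (1:ℝ)))
      (fderiv ℝ f x) := rfl
  rw [h]
  exact (ContinuousLinearMap.apply ℝ ℝ _).contDiff.comp
    (hf.fderiv_right (m := k) (by exact_mod_cast le_refl _))

lemma pd_cont {f : E → ℝ} (hf : ContDiff ℝ 1 f) (i : Fin n) : Continuous (pd f i) :=
  (pd_contDiff (k := 0) hf i).continuous

lemma pd_mul {f g : E → ℝ} {x : E} (hf : DifferentiableAt ℝ f x)
    (hg : DifferentiableAt ℝ g x) (i : Fin n) :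
    pd (fun y => f y * g y) i x = pd f i x * g x + f x * pd g i x := by
  unfold pd
  rw [fderiv_fun_mul hf hg]
  simp [mul_comm]
  ring

lemma pd_add {f g : E → ℝ} {x : E} (hf : DifferentiableAt ℝ f x)
    (hg : DifferentiableAt ℝ g x) (i : Fin n) :
    pd (fun y => f y + g y) i x = pd f i x + pd g i x := by
  unfold pd
  rw [fderiv_fun_add hf hg]; rfl

lemma pd_sum {ι : Type*} (s : Finset ι) {f : ι → E → ℝ} {x : E}
    (hf : ∀ j ∈ s, DifferentiableAt ℝ (f j) x) (i : Fin n) :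
    pd (fun y => ∑ j ∈ s, f j y) i x = ∑ j ∈ s, pd (f j) i x := by
  unfold pd
  rw [fderiv_fun_sum hf]
  simp

lemma pd_exp {f : E → ℝ} {x : E} (hf : DifferentiableAt ℝ f x) (i : Fin n) :
    pd (fun y => Real.exp (f y)) i x = Real.exp (f x) * pd f i x := by
  unfold pd
  rw [fderiv_exp hf]; rfl

lemma pd_const_mul {f : E → ℝ} {x : E} (c : ℝ) (hf : DifferentiableAt ℝ f x) (i : Fin n) :
    pd (fun y => c * f y) i x = c * pd f i x := by
  unfold pd
  rw [fderiv_const_mul hf]; rfl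

lemma support_pd_subset {f : E → ℝ} (i : Fin n) :
    Function.support (pd f i) ⊆ tsupport f := by
  intro x hx
  have := support_fderiv_subset ℝ (f := f)
  by_contra h
  have h0 : fderiv ℝ f x = 0 := by
    by_contra h1
    exact h (this (by simpa [Function.mem_support] using h1))
  simp [pd, h0] at hx

lemma tsupport_pd_subset {f : E → ℝ} (i : Fin n) :
    tsupport (pd f i) ⊆ tsupport f :=
  closure_minimal (support_pd_subset i) (isClosed_closure)

lemma hasCompactSupport_pd {f : E → ℝ} (hf : HasCompactSupport f) (i : Fin n) :
    HasCompactSupport (pd f i) :=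
  hf.mono' (support_pd_subset i)

lemma pd_comm {f : E → ℝ} (hf : ContDiff ℝ 2 f) (i k : Fin n) (x : E) :
    pd (pd f i) k x = pd (pd f k) i x := by
  have hdf : Differentiable ℝ f := hf.differentiable (by norm_num)
  have hF : ContDiff ℝ 1 (fderiv ℝ f) := hf.fderiv_right (m := 1) (by norm_num)
  have hFx : HasFDerivAt (fderiv ℝ f) (fderiv ℝ (fderiv ℝ f) x) x :=
    (hF.differentiable (by norm_num) x).hasFDerivAt
  have hsymm := second_derivative_symmetric (f := f) (fun y => (hdf y).hasFDerivAt) hFx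
  have key : ∀ (v : E) (u : Fin n), pd (fun y => fderiv ℝ f y v) u x
      = fderiv ℝ (fderiv ℝ f) x (EuclideanSpace.single u 1) v := by
    intro v u
    have hc : HasFDerivAt (fun y => fderiv ℝ f y v)
        ((ContinuousLinearMap.apply ℝ ℝ v).comp (fderiv ℝ (fderiv ℝ f) x)) x :=
      (ContinuousLinearMap.apply ℝ ℝ v).hasFDerivAt.comp x hFx
    simp [pd, hc.fderiv]
  show pd (fun y => fderiv ℝ f y (EuclideanSpace.single i 1)) k x
      = pd (fun y => fderiv ℝ f y (EuclideanSpace.single k 1)) i x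
  rw [key, key, hsymm]

private lemma scalarY {s lam κ2 a b c : ℝ} (ha : 1 ≤ a) (hb : κ2^2 ≤ b^2) :
    s^2*(lam^2*κ2^2)*c^2 ≤ (s*lam*(a*b*c))^2 := by
  have h2 : (1:ℝ) ≤ a^2 := by nlinarith
  have h1 : κ2^2*c^2 ≤ b^2*c^2 := mul_le_mul_of_nonneg_right hb (sq_nonneg c)
  nlinarith [mul_nonneg (sq_nonneg (s*lam)) (mul_nonneg (sub_nonneg.2 h2) (sq_nonneg (b*c))),
    mul_nonneg (sq_nonneg (s*lam)) (sub_nonneg.2 h1)]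

theorem lemA (Ω : Set E) (hΩo : IsOpen Ω) (hΩb : Bornology.IsBounded Ω)
    (B : E → Fin n → ℝ) (hB : ∀ i, ContDiff ℝ 1 (fun x => B x i))
    (d : E → ℝ) (hd : ContDiff ℝ 2 d)
    (hdpos : ∀ x ∈ closure Ω, 0 < d x)
    (lam : ℝ) (hlam : 0 < lam) (κ2 : ℝ) (hκ2 : 0 < κ2)
    (hnondeg : ∀ᵐ x ∂(volume.restrict Ω), κ2 ≤ |∑ i, B x i * pd d i x|) :
    ∃ C > (0:ℝ), ∃ s0 > (0:ℝ), ∀ s ≥ s0, ∀ g : E → ℝ,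
      ContDiff ℝ 1 g → HasCompactSupport g → tsupport g ⊆ Ω →
      s^2 * ∫ x, g x ^2 * Real.exp (2*s*Real.exp (lam * d x)) ≤
      (2/(lam^2*κ2^2)) * ∫ x, (∑ i, pd (fun y => g y * B y i) i x)^2
        * Real.exp (2*s*Real.exp (lam * d x)) := by
  have hd2 : ContDiff ℝ ((1:ℕ)+1) d := by exact_mod_cast hd
  have hpdd : ∀ i : Fin n, ContDiff ℝ 1 (pd d i) := fun i => by
    exact_mod_cast pd_contDiff (k := 1) hd2 i
  set φ : E → ℝ := fun x => Real.exp (lam * d x) with hφdef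
  have hφ : ContDiff ℝ 1 φ := (contDiff_const.mul (hd.of_le (by norm_num))).exp
  set β : E → ℝ := fun x => ∑ i, B x i * pd d i x with hβdef
  have hβ : ContDiff ℝ 1 β := ContDiff.sum fun i _ => (hB i).mul (hpdd i)
  set c : E → ℝ := fun x => ∑ i, pd (fun y => B y i) i x with hcdef
  have hccont : Continuous c := continuous_finset_sum _ fun i _ =>
    pd_cont (by exact_mod_cast hB i) i
  set h : Fin n → E → ℝ := fun i x => lam * φ x * β x * B x i with hhdef
  have hh : ∀ i, ContDiff ℝ 1 (h i) := fun i =>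
    ((contDiff_const.mul hφ).mul hβ).mul (hB i)
  set M : E → ℝ := fun x => lam * (φ x * β x * c x) - (1/2) * ∑ i, pd (h i) i x with hMdef
  have hMcont : Continuous M := by
    apply Continuous.sub
    · exact continuous_const.mul ((hφ.continuous.mul hβ.continuous).mul hccont)
    · exact continuous_const.mul (continuous_finset_sum _ fun i _ => pd_cont (hh i) i)
  have hclΩ : IsCompact (closure Ω) :=
    Metric.isCompact_of_isClosed_isBounded isClosed_closure hΩb.closure
  obtain ⟨K, hK⟩ := hclΩ.exists_bound_of_continuousOn hMcont.continuousOn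
  set K' : ℝ := max K 0 with hK'def
  have hK'0 : 0 ≤ K' := le_max_right _ _
  have hKb : ∀ x ∈ closure Ω, |M x| ≤ K' := fun x hx =>
    le_trans (by simpa using hK x hx) (le_max_left _ _)
  set Lκ : ℝ := lam^2 * κ2^2 with hLκdef
  have hLκ : 0 < Lκ := by positivity
  refine ⟨2/Lκ, by positivity, (4*K'+1)/Lκ, by positivity, ?_⟩
  intro s hs g hg hgc hgΩ
  have hs0 : 0 < s := lt_of_lt_of_le (by positivity) hs
  -- basic differentiability
  have hgd : Differentiable ℝ g := hg.differentiable (by norm_num)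
  have hφd : Differentiable ℝ φ := hφ.differentiable (by norm_num)
  have hBd : ∀ i : Fin n, Differentiable ℝ (fun x => B x i) :=
    fun i => (hB i).differentiable (by norm_num)
  set Ew : E → ℝ := fun x => Real.exp (s * φ x) with hEwdef
  have hEw : ContDiff ℝ 1 Ew := (contDiff_const.mul hφ).exp
  have hEwd : Differentiable ℝ Ew := hEw.differentiable (by norm_num)
  set w : E → ℝ := fun x => g x * Ew x with hwdef
  have hw : ContDiff ℝ 1 w := hg.mul hEw
  have hwd : Differentiable ℝ w := hw.differentiable (by norm_num)
  have hwc : HasCompactSupport w := by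
    apply hgc.mono' (fun x hx => ?_)
    have : g x ≠ 0 := fun h0 => by simp [hwdef, h0] at hx
    exact subset_closure this
  have htw : tsupport w ⊆ tsupport g := by
    apply closure_minimal (fun x hx => ?_) isClosed_closure
    have : g x ≠ 0 := fun h0 => by simp [hwdef, h0] at hx
    exact subset_closure this
  set ψ : E → ℝ := fun x => Real.exp (2*s*Real.exp (lam * d x)) with hψdef
  have hψcont : Continuous ψ :=
    (Real.continuous_exp.comp ((continuous_const.mul
      (Real.continuous_exp.comp (continuous_const.mul hd.continuous)))))
  have hψEw : ∀ x, ψ x = Ew x * Ew x := by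
    intro x
    rw [hψdef, hEwdef, ← Real.exp_add]
    ring_nf
    rfl
  set Lg : E → ℝ := fun x => ∑ i, pd (fun y => g y * B y i) i x with hLgdef
  have hgB : ∀ i : Fin n, ContDiff ℝ 1 (fun y => g y * B y i) := fun i => hg.mul (hB i)
  have hLgcont : Continuous Lg :=
    continuous_finset_sum _ fun i _ => pd_cont (hgB i) i
  set X : E → ℝ := fun x => (∑ i, B x i * pd w i x) + c x * w x with hXdef
  set Y : E → ℝ := fun x => s*lam*(φ x * β x * w x) with hYdef
  have hXcont : Continuous X := by
    apply Continuous.add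
    · exact continuous_finset_sum _ fun i _ => ((hB i).continuous.mul (pd_cont hw i))
    · exact hccont.mul hw.continuous
  have hYcont : Continuous Y :=
    continuous_const.mul ((hφ.continuous.mul hβ.continuous).mul hw.continuous)
  -- vanishing outside tsupport g
  have hz : ∀ x, x ∉ tsupport g → g x = 0 ∧ w x = 0 ∧ (∀ i, pd w i x = 0) ∧ Lg x = 0 := by
    intro x hx
    have hgx : g x = 0 := image_eq_zero_of_notMem_tsupport hx
    have hwx : w x = 0 := by simp [hwdef, hgx]
    refine ⟨hgx, hwx, fun i => ?_, ?_⟩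
    · by_contra hne
      exact hx (htw (support_pd_subset i hne))
    · rw [hLgdef]
      apply Finset.sum_eq_zero
      intro i _
      by_contra hne
      apply hx
      have h1 : tsupport (fun y => g y * B y i) ⊆ tsupport g := by
        apply closure_minimal (fun y hy => ?_) isClosed_closure
        have : g y ≠ 0 := fun h0 => by simp [h0] at hy
        exact subset_closure this
      exact h1 (support_pd_subset i hne)
  have mkint : ∀ F : E → ℝ, Continuous F → (∀ x, x ∉ tsupport g → F x = 0) →
      Integrable F := by
    intro F hF h0
    apply hF.integrable_of_hasCompactSupport
    exact hgc.mono' (fun x hx => by by_contra hmem; exact hx (h0 x hmem))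
  -- pointwise derivative computations
  have hpdφ : ∀ (i : Fin n) x, pd φ i x = φ x * (lam * pd d i x) := by
    intro i x
    rw [hφdef]
    rw [pd_exp (f := fun y => lam * d y) ((differentiable_const lam).mul (hd.differentiable (by norm_num)) x) i,
        pd_const_mul lam ((hd.differentiable (by norm_num)) x) i]
  have hpdEw : ∀ (i : Fin n) x, pd Ew i x = Ew x * (s * (φ x * (lam * pd d i x))) := by
    intro i x
    rw [hEwdef]
    rw [pd_exp (f := fun y => s * φ y) ((differentiable_const s).mul hφd x) i,
        pd_const_mul s (hφd x) i, hpdφ i x]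
  have hpdw : ∀ (i : Fin n) x,
      pd w i x = pd g i x * Ew x + w x * (s * (lam * (pd d i x * φ x))) := by
    intro i x
    rw [hwdef]
    rw [pd_mul (hgd x) (hEwd x) i, hpdEw i x]
    ring
  -- the key algebraic identity
  have key : ∀ x, Ew x * Lg x = X x - Y x := by
    intro x
    have hLgx : Lg x = ∑ i, (pd g i x * B x i + g x * pd (fun y => B y i) i x) := by
      rw [hLgdef]
      exact Finset.sum_congr rfl fun i _ => pd_mul (hgd x) (hBd i x) i
    rw [hLgx]
    simp only [hXdef, hYdef, hβdef, hcdef, Finset.mul_sum, Finset.sum_mul]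
    rw [← Finset.sum_add_distrib, ← Finset.sum_sub_distrib]
    refine Finset.sum_congr rfl fun i _ => ?_
    rw [hpdw i x]
    ring
  -- integrability bank and integral manipulations
  set q : E → ℝ := fun x => w x * w x with hqdef
  have hq1 : ContDiff ℝ 1 q := hw.mul hw
  have hqd : Differentiable ℝ q := hq1.differentiable (by norm_num)
  have hqz : ∀ x, x ∉ tsupport g → q x = 0 := fun x hx => by
    simp [hqdef, (hz x hx).2.1]
  have hpdq : ∀ (i : Fin n) x, pd q i x = 2*(w x * pd w i x) := by
    intro i x
    rw [hqdef, pd_mul (hwd x) (hwd x) i]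
    ring
  have hXz : ∀ x, x ∉ tsupport g → X x = 0 := fun x hx => by
    obtain ⟨h1, h2, h3, h4⟩ := hz x hx
    simp [hXdef, h2, h3]
  have hYz : ∀ x, x ∉ tsupport g → Y x = 0 := fun x hx => by
    simp [hYdef, (hz x hx).2.1]
  have intw2 : Integrable (fun x => w x^2) := mkint _ (hw.continuous.pow 2)
    (fun x hx => by rw [(hz x hx).2.1]; ring)
  have intq : Integrable q := mkint _ (hw.continuous.mul hw.continuous) hqz
  have intX2 : Integrable (fun x => X x^2) := mkint _ (hXcont.pow 2)
    (fun x hx => by rw [hXz x hx]; ring)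
  have intY2 : Integrable (fun x => Y x^2) := mkint _ (hYcont.pow 2)
    (fun x hx => by rw [hYz x hx]; ring)
  have intXY : Integrable (fun x => X x * Y x) := mkint _ (hXcont.mul hYcont)
    (fun x hx => by rw [hYz x hx, mul_zero])
  have intJ : Integrable (fun x => Lg x^2 * ψ x) := mkint _ ((hLgcont.pow 2).mul hψcont)
    (fun x hx => by rw [(hz x hx).2.2.2]; ring)
  have hJeq : (∫ x, Lg x^2 * ψ x) = ∫ x, (X x - Y x)^2 := by
    have e : (fun x => Lg x^2 * ψ x) = fun x => (X x - Y x)^2 := funext fun x => by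
      rw [hψEw x, ← key x]; ring
    rw [e]
  have hexp : (∫ x, (X x - Y x)^2)
      = (∫ x, X x^2) - 2*(∫ x, X x*Y x) + ∫ x, Y x^2 := by
    have e : (fun x => (X x - Y x)^2) = fun x => (X x^2 - 2*(X x*Y x)) + Y x^2 :=
      funext fun x => by ring
    calc (∫ x, (X x - Y x)^2) = ∫ x, ((X x^2 - 2*(X x*Y x)) + Y x^2) := by rw [e]
    _ = (∫ x, (X x^2 - 2*(X x*Y x))) + ∫ x, Y x^2 :=
        integral_add (intX2.sub (intXY.const_mul 2)) intY2
    _ = ((∫ x, X x^2) - ∫ x, 2*(X x*Y x)) + ∫ x, Y x^2 := by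
        rw [integral_sub intX2 (intXY.const_mul 2)]
    _ = (∫ x, X x^2) - 2*(∫ x, X x*Y x) + ∫ x, Y x^2 := by rw [integral_const_mul]
  have hI0 : 0 ≤ ∫ x, w x^2 := integral_nonneg fun x => sq_nonneg _
  -- lower bound for ∫ Y²
  have hY2low : s^2*Lκ * ∫ x, w x^2 ≤ ∫ x, Y x^2 := by
    rw [← integral_const_mul]
    refine integral_mono_ae (intw2.const_mul _) intY2 ?_
    filter_upwards [(ae_restrict_iff' hΩo.measurableSet).mp hnondeg] with x hx
    by_cases hxΩ : x ∈ Ω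
    · have hβx : κ2 ≤ |β x| := hx hxΩ
      have hβ2 : κ2^2 ≤ β x^2 := by
        calc κ2^2 ≤ |β x|^2 := pow_le_pow_left₀ hκ2.le hβx 2
        _ = β x^2 := sq_abs _
      have hφ1 : (1:ℝ) ≤ φ x := by
        have h0 : (0:ℝ) ≤ lam * d x := le_of_lt (mul_pos hlam (hdpos x (subset_closure hxΩ)))
        calc (1:ℝ) = Real.exp 0 := Real.exp_zero.symm
        _ ≤ Real.exp (lam * d x) := Real.exp_le_exp.mpr h0
      have hYx : Y x = s*lam*(φ x*β x*w x) := by rw [hYdef]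
      show s^2*Lκ * w x^2 ≤ Y x^2
      rw [hYx, hLκdef]
      exact scalarY hφ1 hβ2
    · have hxg : x ∉ tsupport g := fun hmem => hxΩ (hgΩ hmem)
      show s^2*Lκ * w x^2 ≤ Y x^2
      rw [(hz x hxg).2.1, hYz x hxg]
      simp
  -- integration by parts
  have intpdh : ∀ i : Fin n, Integrable (fun x => pd (h i) i x * q x) := fun i =>
    mkint _ ((pd_cont (hh i) i).mul hq1.continuous) (fun x hx => by rw [hqz x hx, mul_zero])
  have hibp : ∀ i : Fin n, (∫ x, h i x * (w x * pd w i x))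
      = -(1/2) * ∫ x, pd (h i) i x * q x := by
    intro i
    have int2 : Integrable (fun x => h i x * pd q i x) := mkint _
      ((hh i).continuous.mul (pd_cont hq1 i))
      (fun x hx => by rw [hpdq i x, (hz x hx).2.1]; ring)
    have int3 : Integrable (fun x => h i x * q x) := mkint _
      ((hh i).continuous.mul hq1.continuous) (fun x hx => by rw [hqz x hx, mul_zero])
    have hibp0 : (∫ x, h i x * pd q i x) = - ∫ x, pd (h i) i x * q x :=
      integral_mul_fderiv_eq_neg_fderiv_mul_of_integrable (v := EuclideanSpace.single i 1)
        (intpdh i) int2 int3 (fun x _ => (hh i).differentiable (by norm_num) x) (fun x _ => hqd x)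
    have e1 : (fun x => h i x * (w x * pd w i x)) = fun x => (1/2)*(h i x * pd q i x) :=
      funext fun x => by rw [hpdq i x]; ring
    rw [e1, integral_const_mul, hibp0]
    ring
  have intterm : ∀ i : Fin n, Integrable (fun x => h i x * (w x * pd w i x)) := fun i =>
    mkint _ ((hh i).continuous.mul (hw.continuous.mul (pd_cont hw i)))
      (fun x hx => by rw [(hz x hx).2.1]; ring)
  have intlast : Integrable (fun x => lam*(φ x*β x*c x)*q x) := mkint _
    ((continuous_const.mul ((hφ.continuous.mul hβ.continuous).mul hccont)).mul hq1.continuous)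
    (fun x hx => by rw [hqz x hx, mul_zero])
  have intMq : Integrable (fun x => M x * q x) := mkint _ (hMcont.mul hq1.continuous)
    (fun x hx => by rw [hqz x hx, mul_zero])
  have intsumq : Integrable (fun x => (∑ i, pd (h i) i x)*q x) := mkint _
    ((continuous_finset_sum _ fun i _ => pd_cont (hh i) i).mul hq1.continuous)
    (fun x hx => by rw [hqz x hx, mul_zero])
  have hXYpt : ∀ x, X x * Y x
      = s*((∑ i, h i x*(w x*pd w i x)) + lam*(φ x*β x*c x)*q x) := by
    intro x
    simp only [hXdef, hYdef, hhdef, hqdef]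
    conv_lhs => rw [add_mul, Finset.sum_mul]
    conv_rhs => rw [mul_add, Finset.mul_sum]
    congr 1
    · exact Finset.sum_congr rfl fun i _ => by ring
    · ring
  have hXYint : (∫ x, X x*Y x)
      = s * ((∑ i, ∫ x, h i x*(w x*pd w i x)) + ∫ x, lam*(φ x*β x*c x)*q x) := by
    calc (∫ x, X x*Y x)
        = ∫ x, s*((∑ i, h i x*(w x*pd w i x)) + lam*(φ x*β x*c x)*q x) := by
          refine integral_congr_ae (Filter.Eventually.of_forall fun x => ?_)
          exact hXYpt x
    _ = s * ∫ x, ((∑ i, h i x*(w x*pd w i x)) + lam*(φ x*β x*c x)*q x) := integral_const_mul s _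
    _ = s * ((∫ x, ∑ i, h i x*(w x*pd w i x)) + ∫ x, lam*(φ x*β x*c x)*q x) := by
          rw [integral_add (integrable_finset_sum _ (fun i _ => intterm i)) intlast]
    _ = s * ((∑ i, ∫ x, h i x*(w x*pd w i x)) + ∫ x, lam*(φ x*β x*c x)*q x) := by
          rw [integral_finset_sum _ (fun i _ => intterm i)]
  have t1 : (∑ i, ∫ x, h i x*(w x*pd w i x))
      = -(1/2) * ∫ x, (∑ i, pd (h i) i x) * q x := by
    calc (∑ i, ∫ x, h i x*(w x*pd w i x))
        = ∑ i, (-(1/2) * ∫ x, pd (h i) i x * q x) :=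
          Finset.sum_congr rfl fun i _ => hibp i
    _ = -(1/2) * ∑ i, ∫ x, pd (h i) i x * q x := by rw [← Finset.mul_sum]
    _ = -(1/2) * ∫ x, ∑ i, pd (h i) i x * q x := by
          rw [integral_finset_sum _ (fun i _ => intpdh i)]
    _ = -(1/2) * ∫ x, (∑ i, pd (h i) i x) * q x := by
          have e : (fun x => ∑ i, pd (h i) i x * q x)
              = fun x => (∑ i, pd (h i) i x) * q x :=
            funext fun x => (Finset.sum_mul _ _ _).symm
          rw [e]
  have hXYfinal : (∫ x, X x*Y x) = s * ∫ x, M x * q x := by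
    rw [hXYint, t1]
    congr 1
    calc -(1/2) * (∫ x, (∑ i, pd (h i) i x)*q x) + ∫ x, lam*(φ x*β x*c x)*q x
        = (∫ x, -(1/2) * ((∑ i, pd (h i) i x)*q x)) + ∫ x, lam*(φ x*β x*c x)*q x := by
          rw [integral_const_mul]
    _ = ∫ x, (-(1/2) * ((∑ i, pd (h i) i x)*q x) + lam*(φ x*β x*c x)*q x) := by
          rw [integral_add (intsumq.const_mul _) intlast]
    _ = ∫ x, M x * q x := by
          refine integral_congr_ae (Filter.Eventually.of_forall fun x => ?_)
          rw [hMdef]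
          ring
  -- bound the cross term
  have hMq_le : (∫ x, M x * q x) ≤ K' * ∫ x, w x^2 := by
    have hstep : (∫ x, M x*q x) ≤ ∫ x, K' * w x^2 := by
      refine integral_mono intMq (intw2.const_mul K') fun x => ?_
      by_cases hx : x ∈ tsupport g
      · have hxcl : x ∈ closure Ω := subset_closure (hgΩ hx)
        have h1 : M x ≤ K' := le_trans (le_abs_self _) (hKb x hxcl)
        have hq_eq : q x = w x^2 := by rw [hqdef]; ring
        show M x * q x ≤ K' * w x^2
        rw [hq_eq]
        exact mul_le_mul_of_nonneg_right h1 (sq_nonneg _)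
      · show M x * q x ≤ K' * w x^2
        rw [hqz x hx, (hz x hx).2.1, mul_zero]
        positivity
    rw [integral_const_mul] at hstep
    exact hstep
  -- final assembly
  have hg2ψ : (∫ x, g x^2 * ψ x) = ∫ x, w x^2 := by
    have e : (fun x => g x^2 * ψ x) = fun x => w x^2 := funext fun x => by
      calc g x^2 * ψ x = g x^2 * (Ew x * Ew x) := by rw [hψEw x]
      _ = (g x * Ew x)^2 := by ring
      _ = w x^2 := rfl
    rw [e]
  have hX2nn : 0 ≤ ∫ x, X x^2 := integral_nonneg fun x => sq_nonneg _
  have hcross : (∫ x, X x*Y x) ≤ s*(K' * ∫ x, w x^2) := by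
    rw [hXYfinal]
    exact mul_le_mul_of_nonneg_left hMq_le hs0.le
  have hJge : s^2*Lκ*(∫ x, w x^2) - 2*(s*(K' * ∫ x, w x^2)) ≤ ∫ x, Lg x^2 * ψ x := by
    rw [hJeq, hexp]
    have := hY2low
    linarith [hY2low, hX2nn, hcross]
  show s^2 * (∫ x, g x^2 * ψ x) ≤ 2/Lκ * ∫ x, Lg x^2 * ψ x
  rw [hg2ψ, div_mul_eq_mul_div, le_div_iff₀ hLκ]
  have hsL : 4*K' + 1 ≤ s*Lκ := by
    rw [ge_iff_le, div_le_iff₀ hLκ] at hs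
    linarith
  set I : ℝ := ∫ x, w x^2 with hIdef
  set J : ℝ := ∫ x, Lg x^2 * ψ x with hJdef
  have haux : 0 ≤ (s*Lκ - 4*K')*(s*I) := mul_nonneg (by linarith) (mul_nonneg hs0.le hI0)
  clear_value I J Lκ K'
  nlinarith [hJge, haux, hI0]
private lemma hs2aux {c s x : ℝ} (hc : 0 ≤ c) (hx : 0 ≤ x) (h : 2*Real.sqrt c + x ≤ s) :
    4*c ≤ s^2 := by
  have h1 : Real.sqrt c^2 = c := Real.sq_sqrt hc
  have h2 : 0 ≤ Real.sqrt c := Real.sqrt_nonneg c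
  nlinarith [h, h1, h2, hx]

private lemma sq_sub_le_two (p r : ℝ) : (p - r)^2 ≤ 2*p^2 + 2*r^2 := by
  nlinarith [sq_nonneg (p + r)]

private lemma Rbound {n : ℕ} {D : ℝ} (hD : 0 ≤ D) (u : Fin n → ℝ) (gg : ℝ) (b c : Fin n → ℝ)
    (hb : ∀ i, b i^2 ≤ D) (hc : ∀ i, c i^2 ≤ D) :
    (∑ i, (u i * b i + gg * c i))^2
      ≤ 2*(n:ℝ)*((n:ℝ)+1)*D*(gg^2 + ∑ i, u i^2) := by
  have h1 : (∑ i, (u i * b i + gg * c i))^2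
      ≤ (n:ℝ) * ∑ i, (u i * b i + gg * c i)^2 := by
    have := sq_sum_le_card_mul_sum_sq (s := (Finset.univ : Finset (Fin n)))
      (f := fun i => u i * b i + gg * c i)
    simpa using this
  have h2 : ∀ i : Fin n, (u i*b i + gg*c i)^2 ≤ 2*D*u i^2 + 2*D*gg^2 := by
    intro i
    nlinarith [sq_nonneg (u i*b i - gg*c i),
      mul_le_mul_of_nonneg_left (hb i) (sq_nonneg (u i)),
      mul_le_mul_of_nonneg_left (hc i) (sq_nonneg gg), sq_nonneg (u i), sq_nonneg gg]
  have h3 : ∑ i, (u i*b i + gg*c i)^2 ≤ 2*D*(∑ i, u i^2) + (n:ℝ)*(2*D*gg^2) := by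
    calc ∑ i, (u i*b i + gg*c i)^2 ≤ ∑ i : Fin n, (2*D*u i^2 + 2*D*gg^2) :=
        Finset.sum_le_sum fun i _ => h2 i
    _ = 2*D*(∑ i, u i^2) + (n:ℝ)*(2*D*gg^2) := by
        rw [Finset.sum_add_distrib, ← Finset.mul_sum, Finset.sum_const, Finset.card_univ,
          Fintype.card_fin, nsmul_eq_mul]
  have hS : 0 ≤ ∑ i, u i^2 := Finset.sum_nonneg fun i _ => sq_nonneg _
  have hn : (0:ℝ) ≤ (n:ℝ) := Nat.cast_nonneg n
  nlinarith [h1, h3, mul_nonneg (mul_nonneg hn hD) (sq_nonneg gg),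
    mul_nonneg (mul_nonneg (mul_nonneg hn hn) hD) hS,
    mul_le_mul_of_nonneg_left h3 hn]

lemma pd_zero_of_nmem {f : E → ℝ} {x : E} (hx : x ∉ tsupport f) (i : Fin n) :
    pd f i x = 0 := by
  by_contra h
  exact hx (support_pd_subset i h)

lemma tsupport_subset_of_zero {f : E → ℝ} {S : Set E} (hS : IsClosed S)
    (h : ∀ x, x ∉ S → f x = 0) : tsupport f ⊆ S :=
  closure_minimal (fun x hx => by by_contra h2; exact hx (h x h2)) hS


set_option maxHeartbeats 2000000 in
/-- First-order weighted Carleman estimate for `L₀`: with `a ∈ W^{2,∞}`,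
`u₀ ∈ W^{3,∞}`, and the non-degeneracy `|a ∇u₀ · ∇d| ≥ κ₂` a.e., there exist
`C > 0`, `s₂ > 0` with
`s² ∫_Ω (g² + |∇g|²) e^{2sφ₀} ≤ C ∫_Ω (|L₀g|² + |∇(L₀g)|²) e^{2sφ₀}`
for all `s ≥ s₂` and `g ∈ H₀²(Ω)`. -/
theorem carleman_L0_first_order {n : ℕ}
    (Ω : Set (EuclideanSpace ℝ (Fin n))) (hΩo : IsOpen Ω)
    (hΩb : Bornology.IsBounded Ω)
    (a : EuclideanSpace ℝ (Fin n) → Fin n → Fin n → ℝ)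
    (ha : ∀ i j, ContDiff ℝ 2 (fun x => a x i j))
    (hasymm : ∀ x i j, a x i j = a x j i)
    (u0 : EuclideanSpace ℝ (Fin n) → ℝ) (hu0 : ContDiff ℝ 3 u0)
    (d : EuclideanSpace ℝ (Fin n) → ℝ) (hd : ContDiff ℝ 2 d)
    (hdpos : ∀ x ∈ closure Ω, 0 < d x)
    (lam : ℝ) (hlam : 0 < lam) (κ2 : ℝ) (hκ2 : 0 < κ2)
    (hnondeg : ∀ᵐ x ∂(volume.restrict Ω),
      κ2 ≤ |∑ i, (∑ j, a x i j * pd u0 j x) * pd d i x|) :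
    ∃ C > (0 : ℝ), ∃ s2 > (0 : ℝ), ∀ s ≥ s2,
      ∀ g : EuclideanSpace ℝ (Fin n) → ℝ,
        ContDiff ℝ 2 g → HasCompactSupport g → tsupport g ⊆ Ω →
        s ^ 2 * ∫ x in Ω, (g x ^ 2 + ∑ i, pd g i x ^ 2)
            * Real.exp (2 * s * Real.exp (lam * d x)) ≤
          C * ∫ x in Ω, ((L0op a u0 g x) ^ 2 + ∑ i, pd (L0op a u0 g) i x ^ 2)
              * Real.exp (2 * s * Real.exp (lam * d x)) := by
  classical
  have hu03 : ContDiff ℝ ((2:ℕ)+1) u0 := by exact_mod_cast hu0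
  have hpdu0 : ∀ j : Fin n, ContDiff ℝ 2 (pd u0 j) := fun j => by
    exact_mod_cast pd_contDiff (k := 2) hu03 j
  set B : EuclideanSpace ℝ (Fin n) → Fin n → ℝ := fun x i => ∑ j, a x i j * pd u0 j x with hBdef
  have hB2 : ∀ i, ContDiff ℝ 2 (fun x => B x i) := fun i =>
    ContDiff.sum fun j _ => (ha _ j).mul (hpdu0 j)
  have hB1 : ∀ i, ContDiff ℝ 1 (fun x => B x i) := fun i => (hB2 i).of_le (by norm_num)
  have hB21 : ∀ i, ContDiff ℝ ((1:ℕ)+1) (fun x => B x i) := fun i => by exact_mod_cast hB2 i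
  have hBd : ∀ i, Differentiable ℝ (fun x => B x i) := fun i => (hB1 i).differentiable (by norm_num)
  set bb : Fin n → Fin n → EuclideanSpace ℝ (Fin n) → ℝ := fun i k => pd (fun z => B z i) k with hbbdef
  have hbb1 : ∀ i k, ContDiff ℝ 1 (bb i k) := fun i k => by
    exact_mod_cast pd_contDiff (k := 1) (hB21 i) k
  set cc : Fin n → Fin n → EuclideanSpace ℝ (Fin n) → ℝ := fun i k => pd (bb i k) i with hccdef
  have hcc : ∀ i k, Continuous (cc i k) := fun i k => pd_cont (hbb1 i k) i
  set G : EuclideanSpace ℝ (Fin n) → ℝ := fun x => ∑ i, ∑ k, ((bb i k x)^2 + (cc i k x)^2) with hGdef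
  have hGcont : Continuous G := continuous_finset_sum _ fun i _ =>
    continuous_finset_sum _ fun k _ =>
      (((hbb1 i k).continuous.pow 2).add ((hcc i k).pow 2))
  have hclΩ : IsCompact (closure Ω) :=
    Metric.isCompact_of_isClosed_isBounded isClosed_closure hΩb.closure
  obtain ⟨D0, hD0⟩ := hclΩ.exists_bound_of_continuousOn hGcont.continuousOn
  set D : ℝ := max D0 0 with hDdef
  have hD : 0 ≤ D := le_max_right _ _
  have hbound : ∀ x ∈ closure Ω, ∀ i k, bb i k x^2 ≤ D ∧ cc i k x^2 ≤ D := by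
    intro x hx i k
    have hGx : G x ≤ D := le_trans (le_trans (le_abs_self _) (by simpa using hD0 x hx))
      (le_max_left _ _)
    have hterm : (bb i k x)^2 + (cc i k x)^2 ≤ G x := by
      rw [hGdef]
      calc (bb i k x)^2 + (cc i k x)^2
          ≤ ∑ k', ((bb i k' x)^2 + (cc i k' x)^2) :=
            Finset.single_le_sum (f := fun k' => (bb i k' x)^2 + (cc i k' x)^2)
              (fun k' _ => by positivity) (Finset.mem_univ k)
      _ ≤ ∑ i', ∑ k', ((bb i' k' x)^2 + (cc i' k' x)^2) :=
            Finset.single_le_sum (f := fun i' => ∑ k', ((bb i' k' x)^2 + (cc i' k' x)^2))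
              (fun i' _ => Finset.sum_nonneg fun k' _ => by positivity) (Finset.mem_univ i)
    constructor
    · nlinarith [sq_nonneg (cc i k x)]
    · nlinarith [sq_nonneg (bb i k x)]
  obtain ⟨C0, hC0pos, s0, hs0pos, hmain⟩ :=
    lemA Ω hΩo hΩb B hB1 d hd hdpos lam hlam κ2 hκ2 hnondeg
  set CA : ℝ := 2/(lam^2*κ2^2) with hCAdef
  have hCA : 0 < CA := by positivity
  set Cc : ℝ := 2*(n:ℝ)^2*((n:ℝ)+1)*D with hCcdef
  have hCc : 0 ≤ Cc := by positivity
  refine ⟨4*CA, by positivity, s0 + 2*Real.sqrt (CA*Cc) + 1, by positivity, ?_⟩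
  intro s hs g hg2 hgc hgΩ
  have hsq := Real.sqrt_nonneg (CA*Cc)
  have hs' : s ≥ s0 := by linarith
  have hs0 : 0 < s := lt_of_lt_of_le (by positivity) hs
  have hg1 : ContDiff ℝ 1 g := hg2.of_le (by norm_num)
  have hg21 : ContDiff ℝ ((1:ℕ)+1) g := by exact_mod_cast hg2
  have hgd : Differentiable ℝ g := hg1.differentiable (by norm_num)
  have hpdg1 : ∀ k, ContDiff ℝ 1 (pd g k) := fun k => by
    exact_mod_cast pd_contDiff (k := 1) hg21 k
  -- apply the zeroth-order estimate to g and to its partial derivatives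
  have hα := hmain s hs' g hg1 hgc hgΩ
  have hβ : ∀ k : Fin n,
      s^2 * ∫ x, (pd g k x)^2 * Real.exp (2*s*Real.exp (lam * d x)) ≤
      CA * ∫ x, (∑ i, pd (fun y => pd g k y * B y i) i x)^2
        * Real.exp (2*s*Real.exp (lam * d x)) := fun k =>
    hmain s hs' (pd g k) (hpdg1 k) (hasCompactSupport_pd hgc k)
      (le_trans (tsupport_pd_subset k) hgΩ)
  have hψcont : Continuous
      (fun x : EuclideanSpace ℝ (Fin n) => Real.exp (2*s*Real.exp (lam * d x))) :=
    Real.continuous_exp.comp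
      (continuous_const.mul (Real.continuous_exp.comp (continuous_const.mul hd.continuous)))
  have hψpos : ∀ x : EuclideanSpace ℝ (Fin n),
      0 < Real.exp (2*s*Real.exp (lam * d x)) := fun x => Real.exp_pos _
  set Lg : EuclideanSpace ℝ (Fin n) → ℝ := L0op a u0 g with hLgdef
  have eα : (fun x => (∑ i, pd (fun y => g y * B y i) i x)^2 * Real.exp (2*s*Real.exp (lam * d x)))
      = fun x => Lg x^2 * Real.exp (2*s*Real.exp (lam * d x)) := rfl
  rw [eα] at hα
  -- continuity bank
  have hgB2 : ∀ i, ContDiff ℝ 2 (fun y => g y * B y i) := fun i => hg2.mul (hB2 i)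
  have hgB21 : ∀ i, ContDiff ℝ ((1:ℕ)+1) (fun y => g y * B y i) := fun i => by
    exact_mod_cast hgB2 i
  have hpdgB1 : ∀ i, ContDiff ℝ 1 (pd (fun y => g y * B y i) i) := fun i => by
    exact_mod_cast pd_contDiff (k := 1) (hgB21 i) i
  have hLgeq : Lg = fun x => ∑ i, pd (fun y => g y * B y i) i x := rfl
  have hLg1 : ContDiff ℝ 1 Lg := by
    rw [hLgeq]; exact ContDiff.sum fun i _ => hpdgB1 i
  have hLP1 : ∀ (k i : Fin n), ContDiff ℝ 1 (fun y => pd g k y * B y i) := fun k i =>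
    (hpdg1 k).mul (hB1 i)
  have hLPcont : ∀ k, Continuous (fun x => ∑ i, pd (fun y => pd g k y * B y i) i x) :=
    fun k => continuous_finset_sum _ fun i _ => pd_cont (hLP1 k i) i
  set R : Fin n → EuclideanSpace ℝ (Fin n) → ℝ :=
    fun k x => ∑ i, (pd g i x * bb i k x + g x * cc i k x) with hRdef
  have hRcont : ∀ k, Continuous (R k) := fun k => continuous_finset_sum _ fun i _ =>
    ((pd_cont hg1 i).mul (hbb1 i k).continuous).add (hg1.continuous.mul (hcc i k))
  -- the commutator identity
  have hcomm : ∀ (k : Fin n) x, pd Lg k x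
      = (∑ i, pd (fun y => pd g k y * B y i) i x) + R k x := by
    intro k x
    have h1 : pd Lg k x = ∑ i, pd (pd (fun y => g y * B y i) i) k x := by
      rw [hLgeq]
      exact pd_sum Finset.univ (fun i _ => ((hpdgB1 i).differentiable (by norm_num)) x) k
    have hRx : R k x = ∑ i, (pd g i x * bb i k x + g x * cc i k x) := rfl
    rw [h1, hRx, ← Finset.sum_add_distrib]
    refine Finset.sum_congr rfl fun i _ => ?_
    rw [pd_comm (hgB2 i) i k x]
    have e3 : pd (fun y => g y * B y i) k
        = fun y => pd g k y * B y i + g y * bb i k y :=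
      funext fun y => pd_mul (hgd y) (hBd i y) k
    rw [e3, pd_add (f := fun y => pd g k y * B y i) (g := fun y => g y * bb i k y) (((hpdg1 k).differentiable (by norm_num) x).mul (hBd i x))
      ((hgd x).mul (((hbb1 i k).differentiable (by norm_num)) x)) i]
    congr 1
    rw [pd_mul (hgd x) (((hbb1 i k).differentiable (by norm_num)) x) i]
  -- vanishing outside the support of g
  have hzg : ∀ x, x ∉ tsupport g → g x = 0 := fun x hx => image_eq_zero_of_notMem_tsupport hx
  have hzpdg : ∀ (k : Fin n) x, x ∉ tsupport g → pd g k x = 0 := fun k x hx =>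
    pd_zero_of_nmem hx k
  have htsgB : ∀ i, tsupport (fun y => g y * B y i) ⊆ tsupport g := fun i =>
    tsupport_subset_of_zero (isClosed_tsupport g) (fun x hx => by rw [hzg x hx]; ring)
  have hzLg : ∀ x, x ∉ tsupport g → Lg x = 0 := by
    intro x hx
    have e : Lg x = ∑ i, pd (fun y => g y * B y i) i x := rfl
    rw [e]
    exact Finset.sum_eq_zero fun i _ => pd_zero_of_nmem (fun h => hx (htsgB i h)) i
  have htsLg : tsupport Lg ⊆ tsupport g := tsupport_subset_of_zero (isClosed_tsupport g) hzLg
  have hzpdLg : ∀ (k : Fin n) x, x ∉ tsupport g → pd Lg k x = 0 := fun k x hx =>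
    pd_zero_of_nmem (fun h => hx (htsLg h)) k
  have hzLP : ∀ (k : Fin n) x, x ∉ tsupport g →
      (∑ i, pd (fun y => pd g k y * B y i) i x) = 0 := fun k x hx =>
    Finset.sum_eq_zero fun i _ => pd_zero_of_nmem (fun h => hx
      ((tsupport_subset_of_zero (isClosed_tsupport g)
        (fun y hy => by rw [hzpdg k y hy]; ring)) h)) i
  have hzR : ∀ (k : Fin n) x, x ∉ tsupport g → R k x = 0 := by
    intro k x hx
    have e : R k x = ∑ i, (pd g i x * bb i k x + g x * cc i k x) := rfl
    rw [e]
    exact Finset.sum_eq_zero fun i _ => by rw [hzg x hx, hzpdg i x hx]; ring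
  have mkint : ∀ F : EuclideanSpace ℝ (Fin n) → ℝ, Continuous F →
      (∀ x, x ∉ tsupport g → F x = 0) → Integrable F := by
    intro F hF h0
    apply hF.integrable_of_hasCompactSupport
    exact hgc.mono' (fun x hx => by by_contra hmem; exact hx (h0 x hmem))
  -- integrability bank
  have intg2 : Integrable (fun x => g x^2*Real.exp (2*s*Real.exp (lam * d x))) := mkint _ ((hg1.continuous.pow 2).mul hψcont)
    (fun x hx => by rw [hzg x hx]; ring)
  have intpdg2 : ∀ k : Fin n, Integrable (fun x => (pd g k x)^2*Real.exp (2*s*Real.exp (lam * d x))) := fun k =>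
    mkint _ (((pd_cont hg1 k).pow 2).mul hψcont) (fun x hx => by rw [hzpdg k x hx]; ring)
  have intLg2 : Integrable (fun x => Lg x^2*Real.exp (2*s*Real.exp (lam * d x))) := mkint _ ((hLg1.continuous.pow 2).mul hψcont)
    (fun x hx => by rw [hzLg x hx]; ring)
  have intpdLg2 : ∀ k : Fin n, Integrable (fun x => (pd Lg k x)^2*Real.exp (2*s*Real.exp (lam * d x))) := fun k =>
    mkint _ (((pd_cont hLg1 k).pow 2).mul hψcont) (fun x hx => by rw [hzpdLg k x hx]; ring)
  have intR2 : ∀ k : Fin n, Integrable (fun x => (R k x)^2*Real.exp (2*s*Real.exp (lam * d x))) := fun k =>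
    mkint _ (((hRcont k).pow 2).mul hψcont) (fun x hx => by rw [hzR k x hx]; ring)
  have intLP2 : ∀ k : Fin n,
      Integrable (fun x => (∑ i, pd (fun y => pd g k y * B y i) i x)^2*Real.exp (2*s*Real.exp (lam * d x))) := fun k =>
    mkint _ (((hLPcont k).pow 2).mul hψcont) (fun x hx => by rw [hzLP k x hx]; ring)
  -- step γ : control L(∂ₖ g) by ∂ₖ(Lg) and the commutator remainder
  have hγ : ∀ k : Fin n, (∫ x, (∑ i, pd (fun y => pd g k y * B y i) i x)^2*Real.exp (2*s*Real.exp (lam * d x)))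
      ≤ 2*(∫ x, (pd Lg k x)^2*Real.exp (2*s*Real.exp (lam * d x))) + 2*∫ x, (R k x)^2*Real.exp (2*s*Real.exp (lam * d x)) := by
    intro k
    have intmix : Integrable (fun x => (2*(pd Lg k x)^2 + 2*(R k x)^2)*Real.exp (2*s*Real.exp (lam * d x))) := mkint _
      (((continuous_const.mul ((pd_cont hLg1 k).pow 2)).add
        (continuous_const.mul ((hRcont k).pow 2))).mul hψcont)
      (fun x hx => by rw [hzR k x hx, hzpdLg k x hx]; ring)
    have hmono : (∫ x, (∑ i, pd (fun y => pd g k y * B y i) i x)^2*Real.exp (2*s*Real.exp (lam * d x)))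
        ≤ ∫ x, (2*(pd Lg k x)^2 + 2*(R k x)^2)*Real.exp (2*s*Real.exp (lam * d x)) := by
      refine integral_mono (intLP2 k) intmix fun x => ?_
      show (∑ i, pd (fun y => pd g k y * B y i) i x)^2*Real.exp (2*s*Real.exp (lam * d x))
        ≤ (2*(pd Lg k x)^2 + 2*(R k x)^2)*Real.exp (2*s*Real.exp (lam * d x))
      have e : (∑ i, pd (fun y => pd g k y * B y i) i x) = pd Lg k x - R k x := by
        rw [hcomm k x]; ring
      rw [e]
      exact mul_le_mul_of_nonneg_right (sq_sub_le_two _ _) (hψpos x).le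
    calc (∫ x, (∑ i, pd (fun y => pd g k y * B y i) i x)^2*Real.exp (2*s*Real.exp (lam * d x)))
        ≤ ∫ x, (2*(pd Lg k x)^2 + 2*(R k x)^2)*Real.exp (2*s*Real.exp (lam * d x)) := hmono
    _ = ∫ x, (2*((pd Lg k x)^2*Real.exp (2*s*Real.exp (lam * d x))) + 2*((R k x)^2*Real.exp (2*s*Real.exp (lam * d x)))) := by
        refine integral_congr_ae (Filter.Eventually.of_forall fun x => ?_)
        show (2*(pd Lg k x)^2 + 2*(R k x)^2)*Real.exp (2*s*Real.exp (lam * d x)) = 2*((pd Lg k x)^2*Real.exp (2*s*Real.exp (lam * d x))) + 2*((R k x)^2*Real.exp (2*s*Real.exp (lam * d x)))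
        ring
    _ = 2*(∫ x, (pd Lg k x)^2*Real.exp (2*s*Real.exp (lam * d x))) + 2*∫ x, (R k x)^2*Real.exp (2*s*Real.exp (lam * d x)) := by
        rw [integral_add ((intpdLg2 k).const_mul 2) ((intR2 k).const_mul 2),
          integral_const_mul, integral_const_mul]
  -- step δ : bound the commutator remainders
  have intsumR2 : Integrable (fun x => (∑ k, (R k x)^2)*Real.exp (2*s*Real.exp (lam * d x))) := mkint _
    ((continuous_finset_sum _ fun k _ => (hRcont k).pow 2).mul hψcont)
    (fun x hx => by rw [Finset.sum_eq_zero (fun k _ => by rw [hzR k x hx]; ring)]; ring)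
  have intgS : Integrable (fun x => (g x^2 + ∑ i, pd g i x^2)*Real.exp (2*s*Real.exp (lam * d x))) := mkint _
    (((hg1.continuous.pow 2).add (continuous_finset_sum _ fun i _ =>
      (pd_cont hg1 i).pow 2)).mul hψcont)
    (fun x hx => by
      rw [hzg x hx, Finset.sum_eq_zero (fun i _ => by rw [hzpdg i x hx]; ring)]; ring)
  have hδ : (∑ k, ∫ x, (R k x)^2*Real.exp (2*s*Real.exp (lam * d x)))
      ≤ Cc * ∫ x, (g x^2 + ∑ i, pd g i x^2)*Real.exp (2*s*Real.exp (lam * d x)) := by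
    have h1 : (∑ k, ∫ x, (R k x)^2*Real.exp (2*s*Real.exp (lam * d x))) = ∫ x, (∑ k, (R k x)^2)*Real.exp (2*s*Real.exp (lam * d x)) := by
      rw [← integral_finset_sum _ (fun k _ => intR2 k)]
      refine integral_congr_ae (Filter.Eventually.of_forall fun x => ?_)
      show (∑ k, (R k x)^2*Real.exp (2*s*Real.exp (lam * d x))) = (∑ k, (R k x)^2)*Real.exp (2*s*Real.exp (lam * d x))
      rw [Finset.sum_mul]
    rw [h1, ← integral_const_mul]
    refine integral_mono intsumR2 (intgS.const_mul Cc) fun x => ?_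
    show (∑ k, (R k x)^2)*Real.exp (2*s*Real.exp (lam * d x)) ≤ Cc * ((g x^2 + ∑ i, pd g i x^2)*Real.exp (2*s*Real.exp (lam * d x)))
    by_cases hx : x ∈ tsupport g
    · have hxcl : x ∈ closure Ω := subset_closure (hgΩ hx)
      have hRb : ∀ k : Fin n, (R k x)^2
          ≤ 2*(n:ℝ)*((n:ℝ)+1)*D*(g x^2 + ∑ i, pd g i x^2) := fun k =>
        Rbound hD (fun i => pd g i x) (g x) (fun i => bb i k x) (fun i => cc i k x)
          (fun i => (hbound x hxcl i k).1) (fun i => (hbound x hxcl i k).2)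
      have hsum : (∑ k, (R k x)^2) ≤ Cc*(g x^2 + ∑ i, pd g i x^2) := by
        calc (∑ k, (R k x)^2)
            ≤ ∑ _k : Fin n, 2*(n:ℝ)*((n:ℝ)+1)*D*(g x^2 + ∑ i, pd g i x^2) :=
              Finset.sum_le_sum fun k _ => hRb k
        _ = Cc*(g x^2 + ∑ i, pd g i x^2) := by
            rw [Finset.sum_const, Finset.card_univ, Fintype.card_fin, nsmul_eq_mul, hCcdef]
            ring
      calc (∑ k, (R k x)^2)*Real.exp (2*s*Real.exp (lam * d x)) ≤ (Cc*(g x^2 + ∑ i, pd g i x^2))*Real.exp (2*s*Real.exp (lam * d x)) :=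
            mul_le_mul_of_nonneg_right hsum (hψpos x).le
      _ = Cc * ((g x^2 + ∑ i, pd g i x^2)*Real.exp (2*s*Real.exp (lam * d x))) := by ring
    · rw [hzg x hx, Finset.sum_eq_zero (fun k _ => by rw [hzR k x hx]; ring),
        Finset.sum_eq_zero (fun i _ => by rw [hzpdg i x hx]; ring)]
      simp
  -- splitting the combined integrals
  have hsplit1 : (∫ x, (g x^2 + ∑ i, pd g i x^2)*Real.exp (2*s*Real.exp (lam * d x)))
      = (∫ x, g x^2*Real.exp (2*s*Real.exp (lam * d x))) + ∑ k, ∫ x, (pd g k x)^2*Real.exp (2*s*Real.exp (lam * d x)) := by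
    have e : (fun x => (g x^2 + ∑ i, pd g i x^2)*Real.exp (2*s*Real.exp (lam * d x)))
        = fun x => g x^2*Real.exp (2*s*Real.exp (lam * d x)) + ∑ i, ((pd g i x)^2*Real.exp (2*s*Real.exp (lam * d x))) := funext fun x => by
      rw [add_mul, Finset.sum_mul]
    rw [e, integral_add intg2 (integrable_finset_sum _ fun k _ => intpdg2 k),
      integral_finset_sum _ (fun k _ => intpdg2 k)]
  have intLgS : Integrable (fun x => (Lg x^2 + ∑ i, pd Lg i x^2)*Real.exp (2*s*Real.exp (lam * d x))) := mkint _
    (((hLg1.continuous.pow 2).add (continuous_finset_sum _ fun i _ =>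
      (pd_cont hLg1 i).pow 2)).mul hψcont)
    (fun x hx => by
      rw [hzLg x hx, Finset.sum_eq_zero (fun i _ => by rw [hzpdLg i x hx]; ring)]; ring)
  have hsplit2 : (∫ x, (Lg x^2 + ∑ i, pd Lg i x^2)*Real.exp (2*s*Real.exp (lam * d x)))
      = (∫ x, Lg x^2*Real.exp (2*s*Real.exp (lam * d x))) + ∑ k, ∫ x, (pd Lg k x)^2*Real.exp (2*s*Real.exp (lam * d x)) := by
    have e : (fun x => (Lg x^2 + ∑ i, pd Lg i x^2)*Real.exp (2*s*Real.exp (lam * d x)))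
        = fun x => Lg x^2*Real.exp (2*s*Real.exp (lam * d x)) + ∑ i, ((pd Lg i x)^2*Real.exp (2*s*Real.exp (lam * d x))) := funext fun x => by
      rw [add_mul, Finset.sum_mul]
    rw [e, integral_add intLg2 (integrable_finset_sum _ fun k _ => intpdLg2 k),
      integral_finset_sum _ (fun k _ => intpdLg2 k)]
  -- convert the set integrals in the goal
  have hconv1 : (∫ x in Ω, (g x^2 + ∑ i, pd g i x^2)*Real.exp (2*s*Real.exp (lam * d x)))
      = ∫ x, (g x^2 + ∑ i, pd g i x^2)*Real.exp (2*s*Real.exp (lam * d x)) := by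
    refine setIntegral_eq_integral_of_forall_compl_eq_zero fun x hx => ?_
    have hxg : x ∉ tsupport g := fun h => hx (hgΩ h)
    rw [hzg x hxg, Finset.sum_eq_zero (fun i _ => by rw [hzpdg i x hxg]; ring)]
    ring
  have hconv2 : (∫ x in Ω, (Lg x^2 + ∑ i, pd Lg i x^2)*Real.exp (2*s*Real.exp (lam * d x)))
      = ∫ x, (Lg x^2 + ∑ i, pd Lg i x^2)*Real.exp (2*s*Real.exp (lam * d x)) := by
    refine setIntegral_eq_integral_of_forall_compl_eq_zero fun x hx => ?_
    have hxg : x ∉ tsupport g := fun h => hx (hgΩ h)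
    rw [hzLg x hxg, Finset.sum_eq_zero (fun i _ => by rw [hzpdLg i x hxg]; ring)]
    ring
  -- final assembly
  rw [hconv1, hconv2, hsplit1, hsplit2]
  set T1 : ℝ := ∫ x, g x^2*Real.exp (2*s*Real.exp (lam * d x)) with hT1def
  set U1 : ℝ := ∫ x, Lg x^2*Real.exp (2*s*Real.exp (lam * d x)) with hU1def
  set T2 : ℝ := ∑ k, ∫ x, (pd g k x)^2*Real.exp (2*s*Real.exp (lam * d x)) with hT2def
  set U2 : ℝ := ∑ k, ∫ x, (pd Lg k x)^2*Real.exp (2*s*Real.exp (lam * d x)) with hU2def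
  set RS : ℝ := ∑ k, ∫ x, (R k x)^2*Real.exp (2*s*Real.exp (lam * d x)) with hRSdef
  have hT1 : 0 ≤ T1 := integral_nonneg fun x => by positivity
  have hT2 : 0 ≤ T2 := Finset.sum_nonneg fun k _ => integral_nonneg fun x => by positivity
  have hU1 : 0 ≤ U1 := integral_nonneg fun x => by positivity
  have hU2 : 0 ≤ U2 := Finset.sum_nonneg fun k _ => integral_nonneg fun x => by positivity
  have hβγ : s^2 * T2 ≤ 2*CA*U2 + 2*CA*RS := by
    calc s^2 * T2 = ∑ k, s^2 * ∫ x, (pd g k x)^2*Real.exp (2*s*Real.exp (lam * d x)) := by rw [hT2def, Finset.mul_sum]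
    _ ≤ ∑ k, CA * ∫ x, (∑ i, pd (fun y => pd g k y * B y i) i x)^2*Real.exp (2*s*Real.exp (lam * d x)) :=
        Finset.sum_le_sum fun k _ => hβ k
    _ ≤ ∑ k, CA * (2*(∫ x, (pd Lg k x)^2*Real.exp (2*s*Real.exp (lam * d x))) + 2*∫ x, (R k x)^2*Real.exp (2*s*Real.exp (lam * d x))) :=
        Finset.sum_le_sum fun k _ => mul_le_mul_of_nonneg_left (hγ k) hCA.le
    _ = ∑ k, (2*CA*(∫ x, (pd Lg k x)^2*Real.exp (2*s*Real.exp (lam * d x))) + 2*CA*(∫ x, (R k x)^2*Real.exp (2*s*Real.exp (lam * d x)))) :=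
        Finset.sum_congr rfl fun k _ => by ring
    _ = 2*CA*U2 + 2*CA*RS := by
        rw [Finset.sum_add_distrib, ← Finset.mul_sum, ← Finset.mul_sum, hU2def, hRSdef]
  have hδ' : RS ≤ Cc * (T1 + T2) := by
    rw [hRSdef]
    calc (∑ k, ∫ x, (R k x)^2*Real.exp (2*s*Real.exp (lam * d x))) ≤ Cc * ∫ x, (g x^2 + ∑ i, pd g i x^2)*Real.exp (2*s*Real.exp (lam * d x)) := hδ
    _ = Cc * (T1 + T2) := by rw [hsplit1]
  have hs2 : 4*(CA*Cc) ≤ s^2 := by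
    refine hs2aux (mul_nonneg hCA.le hCc) (le_of_lt (by positivity : (0:ℝ) < s0 + 1)) ?_
    linarith
  have hprod : 2*CA*RS ≤ 2*CA*(Cc*(T1+T2)) :=
    mul_le_mul_of_nonneg_left hδ' (by positivity)
  have htot : s^2*(T1+T2) ≤ CA*U1 + 2*CA*U2 + 2*CA*(Cc*(T1+T2)) := by
    have e : s^2*(T1+T2) = s^2*T1 + s^2*T2 := by ring
    rw [e]
    linarith [hα, hβγ, hprod]
  have hprod2 : 0 ≤ (s^2 - 4*(CA*Cc))*(T1+T2) :=
    mul_nonneg (by linarith) (by linarith)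
  have hCAU1 : 0 ≤ CA*U1 := mul_nonneg hCA.le hU1
  nlinarith [htot, hprod2, hCAU1]
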